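/- Let 0 < k < 4. Let F(t) = (1/(2π)) · ₂F₁(1/2, 1/2; 1; 1 − t²/16), G(t) = (1/(2π)) · ₂F₁(1/2, −1/2; 1; 1 − t²/16), and for integers n ≥ 0 set c_n(k) = ∫_k^4 t^{2n} F(t) dt and d_n(k) = ∫_k^4 t^{2n} log(t) F(t) dt. Then the following three identities hold: (i) 0 = (20/k)·c₀(k) − (3(k²+12)/k³)·c₁(k) + (4/k³)·c₂(k) + (8/k)·d₀(k) − (2/k)·d₁(k) + (8−k²)·log(k)·F(k) + 8·log(k)·G(k); (ii) 0 = (120/k³)·c₀(k) − (30(k²+12)/k⁵)·c₁(k) + (40/k⁵)·c₂(k) − 5·F(k) + (80/k²)·G(k); (iii) 0 = (8/k)·c₀(k) − (2/k)·c₁(k) + (8−k²)·F(k) + 8·G(k). -/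

import Mathlib

open MeasureTheory Real

/-- The Pochhammer symbol `(a)_n = a (a+1) ⋯ (a+n-1)` for a real number `a`. -/
noncomputable def rpoch (a : ℝ) (n : ℕ) : ℝ := ∏ i ∈ Finset.range n, (a + i)

/-- The Gauss hypergeometric series `₂F₁(a,b; c; z)` over the reals. -/
noncomputable def rF21 (a b c z : ℝ) : ℝ :=
  ∑' n : ℕ, (rpoch a n * rpoch b n) / rpoch c n * z ^ n / (n.factorial : ℝ)

/-- `F(t) = (1/(2π)) ₂F₁(1/2, 1/2; 1; 1 - t²/16)`. -/
noncomputable def Fdens (t : ℝ) : ℝ :=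
  (1 / (2 * π)) * rF21 (1/2) (1/2) 1 (1 - t ^ 2 / 16)

/-- `G(t) = (1/(2π)) ₂F₁(1/2, -1/2; 1; 1 - t²/16)`. -/
noncomputable def Gdens (t : ℝ) : ℝ :=
  (1 / (2 * π)) * rF21 (1/2) (-(1/2)) 1 (1 - t ^ 2 / 16)

/-- `c_n(k) = ∫_k^4 t^{2n} F(t) dt`. -/
noncomputable def cInt (n : ℕ) (k : ℝ) : ℝ := ∫ t in k..4, t ^ (2 * n) * Fdens t

/-- `d_n(k) = ∫_k^4 t^{2n} log(t) F(t) dt`. -/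
noncomputable def dInt (n : ℕ) (k : ℝ) : ℝ := ∫ t in k..4, t ^ (2 * n) * Real.log t * Fdens t

/-! ### General power series lemmas -/

open Filter Topology

theorem psum_summable {c : ℕ → ℝ} (hc : ∀ n, |c n| ≤ 1) {x : ℝ} (hx : |x| < 1) :
    Summable fun n => c n * x ^ n := by
  apply Summable.of_norm_bounded (summable_geometric_of_lt_one (abs_nonneg x) hx)
  intro n
  rw [Real.norm_eq_abs, abs_mul, abs_pow]
  exact mul_le_of_le_one_left (pow_nonneg (abs_nonneg x) n) (hc n)

theorem psum_deriv_summable {c : ℕ → ℝ} (hc : ∀ n, |c n| ≤ 1) {x : ℝ} (hx : |x| < 1) :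
    Summable fun n => c n * ((n : ℝ) * x ^ (n - 1)) := by
  set r : ℝ := max |x| (1/2) with hr
  have hr1 : r < 1 := max_lt hx (by norm_num)
  have hr0 : (0:ℝ) < r := lt_of_lt_of_le (by norm_num) (le_max_right _ _)
  have hxr : |x| ≤ r := le_max_left _ _
  have hsum : Summable (fun n : ℕ => 2 * n * r ^ n) := by
    have := (summable_pow_mul_geometric_of_norm_lt_one 1 (r := r)
      (by rwa [Real.norm_eq_abs, abs_of_pos hr0])).mul_left 2
    simpa [mul_assoc] using this
  apply Summable.of_norm_bounded hsum
  intro n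
  rw [Real.norm_eq_abs, abs_mul, abs_mul, abs_pow, Nat.abs_cast]
  have h1 : |c n| * ((n:ℝ) * |x| ^ (n-1)) ≤ 1 * ((n:ℝ) * r ^ (n-1)) := by
    apply mul_le_mul (hc n) _ (by positivity) zero_le_one
    exact mul_le_mul_of_nonneg_left (pow_le_pow_left₀ (abs_nonneg x) hxr _) (Nat.cast_nonneg n)
  refine h1.trans ?_
  rw [one_mul]
  rcases Nat.eq_zero_or_pos n with rfl | hn
  · simp
  · have h2 : r ^ (n - 1) ≤ 2 * r ^ n := by
      have h3 : r ^ (n-1) * 1 ≤ r ^ (n-1) * (2 * r) := by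
        apply mul_le_mul_of_nonneg_left _ (by positivity)
        nlinarith [le_max_right |x| (1/2:ℝ)]
      calc r ^ (n-1) = r ^ (n-1) * 1 := by ring
      _ ≤ r ^ (n-1) * (2*r) := h3
      _ = 2 * (r ^ (n-1) * r) := by ring
      _ = 2 * r ^ n := by rw [← pow_succ, Nat.sub_add_cancel hn]
    nlinarith [Nat.cast_pos (α := ℝ) |>.mpr hn, pow_nonneg hr0.le (n-1)]

theorem psum_hasDerivAt {c : ℕ → ℝ} (hc : ∀ n, |c n| ≤ 1) {x : ℝ} (hx : |x| < 1) :
    HasDerivAt (fun y => ∑' n, c n * y ^ n) (∑' n, c n * ((n : ℝ) * x ^ (n - 1))) x := by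
  have hball : x ∈ Metric.ball (0:ℝ) 1 := by simpa [Real.norm_eq_abs] using hx
  refine hasDerivAt_of_tendstoLocallyUniformlyOn (f := fun N y => ∑ n ∈ Finset.range N,
      c n * y ^ n) (f' := fun N y => ∑ n ∈ Finset.range N, c n * ((n:ℝ) * y ^ (n-1)))
      (g := fun y => ∑' n, c n * y ^ n) (g' := fun y => ∑' n, c n * ((n:ℝ) * y ^ (n-1)))
      (l := atTop) Metric.isOpen_ball ?_ ?_ ?_ hball
  · rw [tendstoLocallyUniformlyOn_iff_forall_isCompact Metric.isOpen_ball]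
    intro K hK hKc
    rcases K.eq_empty_or_nonempty with rfl | hne
    · simp [tendstoUniformlyOn_empty]
    obtain ⟨z, hzK, hz⟩ := hKc.exists_isMaxOn hne continuous_norm.continuousOn
    set r : ℝ := max ‖z‖ (1/2) with hr
    have hr1 : r < 1 := by
      have := hK hzK
      simp only [Metric.mem_ball, dist_zero_right] at this
      exact max_lt this (by norm_num)
    have hr0 : (0:ℝ) < r := lt_of_lt_of_le (by norm_num) (le_max_right _ _)
    apply tendstoUniformlyOn_tsum_nat (u := fun n => 2 * n * r ^ n)
    · have := (summable_pow_mul_geometric_of_norm_lt_one 1 (r := r)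
        (by rwa [Real.norm_eq_abs, abs_of_pos hr0])).mul_left 2
      simpa [mul_assoc] using this
    · intro n y hy
      have hyr : ‖y‖ ≤ r := le_trans (hz hy) (le_max_left _ _)
      rw [Real.norm_eq_abs, abs_mul, abs_mul]
      have h1 : |c n| * (|(n:ℝ)| * |y ^ (n-1)|) ≤ 1 * (n * r ^ (n-1)) := by
        apply mul_le_mul (hc n) _ (by positivity) zero_le_one
        rw [abs_pow, Nat.abs_cast]
        apply mul_le_mul_of_nonneg_left _ (Nat.cast_nonneg n)
        exact pow_le_pow_left₀ (abs_nonneg y) (by rwa [Real.norm_eq_abs] at hyr) _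
      refine h1.trans ?_
      rw [one_mul]
      rcases Nat.eq_zero_or_pos n with rfl | hn
      · simp
      · have : r ^ (n - 1) ≤ 2 * r ^ n := by
          have h2 : r ^ (n-1) * 1 ≤ r ^ (n-1) * (2 * r) := by
            apply mul_le_mul_of_nonneg_left _ (by positivity)
            nlinarith [le_max_right ‖z‖ (1/2:ℝ)]
          calc r ^ (n-1) = r ^ (n-1) * 1 := by ring
          _ ≤ r ^ (n-1) * (2*r) := h2
          _ = 2 * (r ^ (n-1) * r) := by ring
          _ = 2 * r ^ n := by rw [← pow_succ, Nat.sub_add_cancel hn]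
        nlinarith [Nat.cast_pos (α := ℝ) |>.mpr hn, pow_nonneg hr0.le (n-1)]
  · filter_upwards with N y _
    apply HasDerivAt.fun_sum
    intro n _
    simpa [mul_comm] using (hasDerivAt_pow n y).const_mul (c n)
  · intro y hy
    have : |y| < 1 := by simpa [Real.norm_eq_abs] using hy
    exact (psum_summable hc this).hasSum.tendsto_sum_nat

/-! ### Coefficient lemmas -/

lemma rpoch_zero (a : ℝ) : rpoch a 0 = 1 := by simp [rpoch]

lemma rpoch_succ (a : ℝ) (n : ℕ) : rpoch a (n+1) = rpoch a n * (a + n) := by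
  simp [rpoch, Finset.prod_range_succ]

lemma rpoch_succ' (a : ℝ) (n : ℕ) : rpoch a (n+1) = a * rpoch (a+1) n := by
  simp only [rpoch, Finset.prod_range_succ']
  rw [Nat.cast_zero, add_zero, mul_comm]
  congr 1
  apply Finset.prod_congr rfl
  intro i _
  push_cast; ring

lemma rpoch_one (n : ℕ) : rpoch 1 n = n.factorial := by
  induction n with
  | zero => simp [rpoch_zero]
  | succ n ih => rw [rpoch_succ, ih]; push_cast [Nat.factorial_succ]; ring

lemma rpoch_half_pos (n : ℕ) : 0 < rpoch (1/2) n := by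
  apply Finset.prod_pos
  intro i _
  positivity

lemma rpoch_half_le (n : ℕ) : rpoch (1/2) n ≤ n.factorial := by
  rw [← rpoch_one]
  apply Finset.prod_le_prod
  · intro i _; positivity
  · intro i _; norm_num

lemma rpoch_neghalf_abs_le (n : ℕ) : |rpoch (-(1/2)) n| ≤ n.factorial := by
  rw [← rpoch_one, rpoch, rpoch, Finset.abs_prod]
  apply Finset.prod_le_prod
  · intro i _; positivity
  · intro i _
    rw [abs_le]
    constructor <;> [nlinarith [Nat.cast_nonneg (α := ℝ) i]; nlinarith [Nat.cast_nonneg (α := ℝ) i]]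

noncomputable def aa (n : ℕ) : ℝ := rpoch (1/2) n * rpoch (1/2) n / rpoch 1 n / n.factorial
noncomputable def bb (n : ℕ) : ℝ := rpoch (1/2) n * rpoch (-(1/2)) n / rpoch 1 n / n.factorial

lemma factorial_pos' (n : ℕ) : (0:ℝ) < n.factorial := by positivity

lemma aa_abs_le (n : ℕ) : |aa n| ≤ 1 := by
  rw [aa, rpoch_one, abs_div, abs_div, Nat.abs_cast, div_le_one (factorial_pos' n),
    div_le_iff₀ (factorial_pos' n), abs_mul]
  have h := rpoch_half_le n
  have h2 := (rpoch_half_pos n).le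
  rw [abs_of_nonneg h2]
  exact mul_le_mul h h (by positivity) (by positivity)

lemma bb_abs_le (n : ℕ) : |bb n| ≤ 1 := by
  rw [bb, rpoch_one, abs_div, abs_div, Nat.abs_cast, div_le_one (factorial_pos' n),
    div_le_iff₀ (factorial_pos' n), abs_mul]
  have h := rpoch_half_le n
  have h2 := (rpoch_half_pos n).le
  rw [abs_of_nonneg h2]
  exact mul_le_mul h (rpoch_neghalf_abs_le n) (abs_nonneg _) (by positivity)

lemma aa_zero : aa 0 = 1 := by simp [aa, rpoch_zero]
lemma bb_zero : bb 0 = 1 := by simp [bb, rpoch_zero]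

lemma aa_eq_bb (n : ℕ) : aa n = (1 - 2 * (n:ℝ)) * bb n := by
  cases n with
  | zero => simp [aa_zero, bb_zero]
  | succ m =>
    have hnh : rpoch (-(1/2)) (m+1) = -(1/2) * rpoch (1/2) m := by
      rw [rpoch_succ']; norm_num
    have hh : rpoch (1/2) (m+1) = rpoch (1/2) m * (1/2 + m) := rpoch_succ _ _
    rw [aa, bb, hnh, hh]
    push_cast
    field_simp
    ring

lemma aa_rec (n : ℕ) : (2 * (n:ℝ) + 3) * aa (n+1) - bb (n+1) = (2 * n + 1) * aa n := by
  have hnh : rpoch (-(1/2)) (n+1) = -(1/2) * rpoch (1/2) n := by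
    rw [rpoch_succ']; norm_num
  have hh : rpoch (1/2) (n+1) = rpoch (1/2) n * (1/2 + n) := rpoch_succ _ _
  have hfact : ((n+1).factorial : ℝ) = (n+1) * n.factorial := by
    push_cast [Nat.factorial_succ]; ring
  have h1 : rpoch 1 (n+1) = ((n+1).factorial : ℝ) := rpoch_one _
  have h0 : rpoch 1 n = (n.factorial : ℝ) := rpoch_one _
  have hf0 : (n.factorial : ℝ) ≠ 0 := (factorial_pos' n).ne'
  have hn1 : ((n:ℝ) + 1) ≠ 0 := by positivity
  rw [aa, aa, bb, hnh, hh, h1, h0, hfact]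
  field_simp
  ring

/-! ### The two series and their derivative series -/

noncomputable def fS (x : ℝ) : ℝ := ∑' n : ℕ, aa n * x ^ n
noncomputable def gS (x : ℝ) : ℝ := ∑' n : ℕ, bb n * x ^ n
noncomputable def fD (x : ℝ) : ℝ := ∑' n : ℕ, aa n * ((n:ℝ) * x ^ (n - 1))
noncomputable def gD (x : ℝ) : ℝ := ∑' n : ℕ, bb n * ((n:ℝ) * x ^ (n - 1))

lemma hasDerivAt_fS {x : ℝ} (hx : |x| < 1) : HasDerivAt fS (fD x) x :=
  psum_hasDerivAt aa_abs_le hx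

lemma hasDerivAt_gS {x : ℝ} (hx : |x| < 1) : HasDerivAt gS (gD x) x :=
  psum_hasDerivAt bb_abs_le hx

lemma R1 {x : ℝ} (hx : |x| < 1) : 2 * x * gD x = gS x - fS x := by
  have SA := psum_summable aa_abs_le hx
  have SC := psum_summable bb_abs_le hx
  have h1 : ∑' n : ℕ, (2*x) * (bb n * ((n:ℝ) * x ^ (n-1))) = 2 * x * gD x := by
    rw [tsum_mul_left]; rfl
  have h2 : gS x - fS x = ∑' n : ℕ, (bb n * x ^ n - aa n * x ^ n) := (Summable.tsum_sub SC SA).symm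
  rw [← h1, h2]
  apply tsum_congr
  intro n
  cases n with
  | zero => simp [aa_zero, bb_zero]
  | succ m =>
    have h := aa_eq_bb (m+1)
    push_cast at h ⊢
    linear_combination (x^(m+1)) * h

lemma R2 {x : ℝ} (hx : |x| < 1) :
    2 * x * (1 - x) * fD x = gS x - (1 - x) * fS x := by
  have SA := psum_summable aa_abs_le hx
  have SC := psum_summable bb_abs_le hx
  have SB := psum_deriv_summable aa_abs_le hx
  have hfun1 : (fun n : ℕ => aa n * ((n:ℝ) * x ^ n)) =
      fun n : ℕ => x * (aa n * ((n:ℝ) * x ^ (n-1))) := by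
    funext n
    cases n with
    | zero => simp
    | succ m => rw [Nat.add_sub_cancel, pow_succ]; push_cast; ring
  have ST1 : Summable (fun n : ℕ => aa n * ((n:ℝ) * x ^ n)) := by
    rw [hfun1]; exact SB.mul_left x
  have hT1 : ∑' n : ℕ, aa n * ((n:ℝ) * x ^ n) = x * fD x := by
    rw [hfun1, tsum_mul_left]; rfl
  have hVfun : (fun n : ℕ => (2*(n:ℝ)+1) * (aa n * x ^ n)) =
      fun n : ℕ => 2 * (aa n * ((n:ℝ) * x ^ n)) + aa n * x ^ n := by
    funext n; ring
  have SV : Summable (fun n : ℕ => (2*(n:ℝ)+1) * (aa n * x ^ n)) := by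
    rw [hVfun]; exact (ST1.mul_left 2).add SA
  have hV : ∑' n : ℕ, (2*(n:ℝ)+1) * (aa n * x ^ n) = 2 * (x * fD x) + fS x := by
    rw [hVfun, Summable.tsum_add (ST1.mul_left 2) SA, tsum_mul_left, hT1]; rfl
  have hfun2 : (fun n : ℕ => (2*(n:ℝ)+1) * (aa n * x ^ (n+1))) =
      fun n : ℕ => x * ((2*(n:ℝ)+1) * (aa n * x ^ n)) := by
    funext n; rw [pow_succ]; ring
  have SP : Summable (fun n : ℕ => (2*(n:ℝ)+1) * (aa n * x ^ (n+1))) := by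
    rw [hfun2]; exact SV.mul_left x
  have hP : ∑' n : ℕ, (2*(n:ℝ)+1) * (aa n * x ^ (n+1)) = x * (2 * (x * fD x) + fS x) := by
    rw [hfun2, tsum_mul_left, hV]
  have SW : Summable (fun n : ℕ => bb n * x ^ n - (2*(n:ℝ)+1) * (aa n * x ^ n)) := SC.sub SV
  have hWsplit : ∑' n : ℕ, (bb n * x ^ n - (2*(n:ℝ)+1) * (aa n * x ^ n))
      = gS x - (2 * (x * fD x) + fS x) := by
    rw [Summable.tsum_sub SC SV, hV]; rfl
  have hWshift : ∑' n : ℕ, (bb n * x ^ n - (2*(n:ℝ)+1) * (aa n * x ^ n))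
      = - ∑' n : ℕ, (2*(n:ℝ)+1) * (aa n * x ^ (n+1)) := by
    rw [Summable.tsum_eq_zero_add SW]
    have h0 : bb 0 * x ^ 0 - (2*((0:ℕ):ℝ)+1) * (aa 0 * x ^ 0) = 0 := by
      simp [aa_zero, bb_zero]
    rw [h0, zero_add, ← tsum_neg]
    apply tsum_congr
    intro n
    have h := aa_rec n
    push_cast
    linear_combination (-(x^(n+1))) * h
  rw [hWshift, hP] at hWsplit
  linear_combination hWsplit

/-! ### Density functions -/

lemma Fdens_eq (t : ℝ) : Fdens t = (1/(2*π)) * fS (1 - t^2/16) := by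
  unfold Fdens rF21 fS
  congr 1
  apply tsum_congr
  intro n
  rw [aa]
  ring

lemma Gdens_eq (t : ℝ) : Gdens t = (1/(2*π)) * gS (1 - t^2/16) := by
  unfold Gdens rF21 gS
  congr 1
  apply tsum_congr
  intro n
  rw [bb]
  ring

lemma abs_inner_lt (t : ℝ) (h0 : 0 < t) (h5 : t < 9/2) : |1 - t^2/16| < 1 := by
  rw [abs_lt]
  constructor <;> nlinarith

lemma hasDerivAt_inner (t : ℝ) : HasDerivAt (fun z : ℝ => 1 - z^2/16) (-(t/8)) t := by
  have h := ((hasDerivAt_pow 2 t).div_const 16).const_sub 1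
  refine h.congr_deriv ?_
  push_cast
  ring

lemma hasDerivAt_Fdens (t : ℝ) (h0 : 0 < t) (h5 : t < 9/2) :
    HasDerivAt Fdens ((1/(2*π)) * (fD (1 - t^2/16) * (-(t/8)))) t := by
  have hx := abs_inner_lt t h0 h5
  have h := ((hasDerivAt_fS hx).comp t (hasDerivAt_inner t)).const_mul (1/(2*π))
  have hfe : Fdens = fun y => (1/(2*π)) * fS (1 - y^2/16) := funext Fdens_eq
  rw [hfe]
  exact h

lemma hasDerivAt_Gdens (t : ℝ) (h0 : 0 < t) (h5 : t < 9/2) :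
    HasDerivAt Gdens ((1/(2*π)) * (gD (1 - t^2/16) * (-(t/8)))) t := by
  have hx := abs_inner_lt t h0 h5
  have h := ((hasDerivAt_gS hx).comp t (hasDerivAt_inner t)).const_mul (1/(2*π))
  have hfe : Gdens = fun y => (1/(2*π)) * gS (1 - y^2/16) := funext Gdens_eq
  rw [hfe]
  exact h

lemma rel1 (t : ℝ) (h0 : 0 < t) (h5 : t < 9/2) :
    (16 - t^2) * ((1/(2*π)) * gD (1 - t^2/16)) = 8 * Gdens t - 8 * Fdens t := by
  have hx := abs_inner_lt t h0 h5
  have h := R1 hx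
  rw [Gdens_eq, Fdens_eq]
  linear_combination (4/π) * h

lemma rel2 (t : ℝ) (h0 : 0 < t) (h5 : t < 9/2) :
    (16 - t^2) * t^2 * ((1/(2*π)) * fD (1 - t^2/16)) = 128 * Gdens t - 8 * t^2 * Fdens t := by
  have hx := abs_inner_lt t h0 h5
  have h := R2 hx
  rw [Gdens_eq, Fdens_eq]
  linear_combination (64/π) * h

lemma fS_zero : fS 0 = 1 := by
  unfold fS
  rw [tsum_eq_single 0]
  · simp [aa_zero]
  · intro n hn
    simp [zero_pow hn]

lemma gS_zero : gS 0 = 1 := by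
  unfold gS
  rw [tsum_eq_single 0]
  · simp [bb_zero]
  · intro n hn
    simp [zero_pow hn]

lemma Fdens_four : Fdens 4 = 1/(2*π) := by
  rw [Fdens_eq, show (1 - (4:ℝ)^2/16) = 0 by norm_num, fS_zero, mul_one]

lemma Gdens_four : Gdens 4 = 1/(2*π) := by
  rw [Gdens_eq, show (1 - (4:ℝ)^2/16) = 0 by norm_num, gS_zero, mul_one]

/-! ### FTC lemmas -/

lemma contOn_integrand (n : ℕ) :
    ContinuousOn (fun t => t ^ (2*n) * Fdens t) (Set.Ioo 0 (9/2)) := fun t ht =>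
  ((continuous_pow (2*n)).continuousAt.mul
    (hasDerivAt_Fdens t ht.1 ht.2).continuousAt).continuousWithinAt

lemma contOn_integrand_log (n : ℕ) :
    ContinuousOn (fun t => t ^ (2*n) * Real.log t * Fdens t) (Set.Ioo 0 (9/2)) := fun t ht =>
  (((continuous_pow (2*n)).continuousAt.mul
      (Real.continuousAt_log (ne_of_gt ht.1))).mul
    (hasDerivAt_Fdens t ht.1 ht.2).continuousAt).continuousWithinAt

lemma uIcc_sub (k : ℝ) (h0 : 0 < k) (h5 : k < 9/2) :
    Set.uIcc k 4 ⊆ Set.Ioo (0:ℝ) (9/2) := by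
  have h1 : k ∈ Set.Ioo (0:ℝ) (9/2) := ⟨h0, h5⟩
  have h2 : (4:ℝ) ∈ Set.Ioo (0:ℝ) (9/2) := by norm_num
  exact Set.OrdConnected.uIcc_subset Set.ordConnected_Ioo h1 h2

lemma hasDerivAt_cInt (n : ℕ) (k : ℝ) (h0 : 0 < k) (h5 : k < 9/2) :
    HasDerivAt (cInt n) (-(k ^ (2*n) * Fdens k)) k := by
  have hcont := contOn_integrand n
  have hint : IntervalIntegrable (fun t => t ^ (2*n) * Fdens t) volume k 4 :=
    (hcont.mono (uIcc_sub k h0 h5)).intervalIntegrable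
  have hmeas : StronglyMeasurableAtFilter (fun t => t ^ (2*n) * Fdens t) (𝓝 k) :=
    hcont.stronglyMeasurableAtFilter isOpen_Ioo k ⟨h0, h5⟩
  have hca : ContinuousAt (fun t => t ^ (2*n) * Fdens t) k :=
    (continuous_pow (2*n)).continuousAt.mul (hasDerivAt_Fdens k h0 h5).continuousAt
  exact intervalIntegral.integral_hasDerivAt_left hint hmeas hca

lemma hasDerivAt_dInt (n : ℕ) (k : ℝ) (h0 : 0 < k) (h5 : k < 9/2) :
    HasDerivAt (dInt n) (-(k ^ (2*n) * Real.log k * Fdens k)) k := by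
  have hcont := contOn_integrand_log n
  have hint : IntervalIntegrable (fun t => t ^ (2*n) * Real.log t * Fdens t) volume k 4 :=
    (hcont.mono (uIcc_sub k h0 h5)).intervalIntegrable
  have hmeas : StronglyMeasurableAtFilter (fun t => t ^ (2*n) * Real.log t * Fdens t) (𝓝 k) :=
    hcont.stronglyMeasurableAtFilter isOpen_Ioo k ⟨h0, h5⟩
  have hca : ContinuousAt (fun t => t ^ (2*n) * Real.log t * Fdens t) k :=
    ((continuous_pow (2*n)).continuousAt.mul
      (Real.continuousAt_log (ne_of_gt h0))).mul (hasDerivAt_Fdens k h0 h5).continuousAt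
  exact intervalIntegral.integral_hasDerivAt_left hint hmeas hca

lemma cInt_four (n : ℕ) : cInt n 4 = 0 := intervalIntegral.integral_same
lemma dInt_four (n : ℕ) : dInt n 4 = 0 := intervalIntegral.integral_same

/-! ### Constancy helper -/

lemma vanish {H : ℝ → ℝ} (hd : ∀ y : ℝ, 0 < y → y < 4 → HasDerivAt H 0 y)
    (hc : ∀ y : ℝ, 0 < y → y ≤ 4 → ContinuousAt H y) (h4 : H 4 = 0) :
    ∀ k : ℝ, 0 < k → k ≤ 4 → H k = 0 := by
  intro k h0 hk4
  have h := constant_of_has_deriv_right_zero (f := H) (a := k) (b := 4)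
    (fun y hy => (hc y (lt_of_lt_of_le h0 hy.1) hy.2).continuousWithinAt)
    (fun y hy => (hd y (lt_of_lt_of_le h0 hy.1) hy.2).hasDerivWithinAt)
    4 ⟨hk4, le_refl 4⟩
  rw [h4] at h
  exact h.symm

/-! ### Identity (iii) -/

lemma hasDerivAt_H3 (y : ℝ) (h0 : 0 < y) (h5 : y < 9/2) :
    HasDerivAt (fun z => 8 * cInt 0 z - 2 * cInt 1 z + z * (8 - z^2) * Fdens z
        + 8 * z * Gdens z)
      (8 * -(y ^ (2*0) * Fdens y) - 2 * -(y ^ (2*1) * Fdens y)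
        + ((8 - 3*y^2) * Fdens y + y * (8 - y^2) * ((1/(2*π)) * (fD (1 - y^2/16) * (-(y/8)))))
        + (8 * Gdens y + 8 * y * ((1/(2*π)) * (gD (1 - y^2/16) * (-(y/8)))))) y := by
  have hF := hasDerivAt_Fdens y h0 h5
  have hG := hasDerivAt_Gdens y h0 h5
  have hc0 := hasDerivAt_cInt 0 y h0 h5
  have hc1 := hasDerivAt_cInt 1 y h0 h5
  have hp : HasDerivAt (fun z : ℝ => z * (8 - z^2)) (8 - 3*y^2) y := by
    have h := (hasDerivAt_id y).mul ((hasDerivAt_pow 2 y).const_sub 8)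
    refine h.congr_deriv ?_
    simp only [id_eq]
    push_cast
    ring
  have h8 : HasDerivAt (fun z : ℝ => 8 * z) 8 y := by
    simpa using (hasDerivAt_id y).const_mul (8:ℝ)
  exact (((hc0.const_mul 8).sub (hc1.const_mul 2)).add (hp.mul hF)).add (h8.mul hG)

lemma key3 : ∀ k : ℝ, 0 < k → k ≤ 4 →
    8 * cInt 0 k - 2 * cInt 1 k + k * (8 - k^2) * Fdens k + 8 * k * Gdens k = 0 := by
  apply vanish
  · intro y h0 h4
    have h := hasDerivAt_H3 y h0 (by linarith)
    have hz : (8 * -(y ^ (2*0) * Fdens y) - 2 * -(y ^ (2*1) * Fdens y)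
        + ((8 - 3*y^2) * Fdens y + y * (8 - y^2) * ((1/(2*π)) * (fD (1 - y^2/16) * (-(y/8)))))
        + (8 * Gdens y + 8 * y * ((1/(2*π)) * (gD (1 - y^2/16) * (-(y/8)))))) = 0 := by
      have hr1 := rel1 y h0 (by linarith)
      have hr2 := rel2 y h0 (by linarith)
      have h16 : (16:ℝ) - y^2 ≠ 0 := by nlinarith
      apply mul_left_cancel₀ h16
      rw [mul_zero]
      linear_combination (-(8-y^2)/8) * hr2 + (-(y^2)) * hr1
    rw [hz] at h
    exact h
  · intro y h0 h4
    exact (hasDerivAt_H3 y h0 (by linarith)).continuousAt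
  · rw [cInt_four, cInt_four, Fdens_four, Gdens_four]
    ring

/-! ### Identity (ii) -/

lemma hasDerivAt_H2 (y : ℝ) (h0 : 0 < y) (h5 : y < 9/2) :
    HasDerivAt (fun z => 120 * z^2 * cInt 0 z - 30 * (z^2 + 12) * cInt 1 z + 40 * cInt 2 z
        - 5 * z^5 * Fdens z + 80 * z^3 * Gdens z)
      ((240 * y * cInt 0 y + 120 * y^2 * -(y ^ (2*0) * Fdens y))
        - (60 * y * cInt 1 y + 30 * (y^2 + 12) * -(y ^ (2*1) * Fdens y))
        + 40 * -(y ^ (2*2) * Fdens y)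
        - (25 * y^4 * Fdens y + 5 * y^5 * ((1/(2*π)) * (fD (1 - y^2/16) * (-(y/8)))))
        + (240 * y^2 * Gdens y + 80 * y^3 * ((1/(2*π)) * (gD (1 - y^2/16) * (-(y/8)))))) y := by
  have hF := hasDerivAt_Fdens y h0 h5
  have hG := hasDerivAt_Gdens y h0 h5
  have hc0 := hasDerivAt_cInt 0 y h0 h5
  have hc1 := hasDerivAt_cInt 1 y h0 h5
  have hc2 := hasDerivAt_cInt 2 y h0 h5
  have hp1 : HasDerivAt (fun z : ℝ => 120 * z^2) (240 * y) y := by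
    have h := (hasDerivAt_pow 2 y).const_mul (120:ℝ)
    refine h.congr_deriv ?_
    push_cast
    ring
  have hp2 : HasDerivAt (fun z : ℝ => 30 * (z^2 + 12)) (60 * y) y := by
    have h := ((hasDerivAt_pow 2 y).add_const 12).const_mul (30:ℝ)
    refine h.congr_deriv ?_
    push_cast
    ring
  have hp3 : HasDerivAt (fun z : ℝ => 5 * z^5) (25 * y^4) y := by
    have h := (hasDerivAt_pow 5 y).const_mul (5:ℝ)
    refine h.congr_deriv ?_
    push_cast
    ring
  have hp4 : HasDerivAt (fun z : ℝ => 80 * z^3) (240 * y^2) y := by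
    have h := (hasDerivAt_pow 3 y).const_mul (80:ℝ)
    refine h.congr_deriv ?_
    push_cast
    ring
  exact ((((hp1.mul hc0).sub (hp2.mul hc1)).add (hc2.const_mul 40)).sub (hp3.mul hF)).add
    (hp4.mul hG)

lemma key2 : ∀ k : ℝ, 0 < k → k ≤ 4 →
    120 * k^2 * cInt 0 k - 30 * (k^2 + 12) * cInt 1 k + 40 * cInt 2 k
      - 5 * k^5 * Fdens k + 80 * k^3 * Gdens k = 0 := by
  apply vanish
  · intro y h0 h4
    have h := hasDerivAt_H2 y h0 (by linarith)
    have hz : ((240 * y * cInt 0 y + 120 * y^2 * -(y ^ (2*0) * Fdens y))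
        - (60 * y * cInt 1 y + 30 * (y^2 + 12) * -(y ^ (2*1) * Fdens y))
        + 40 * -(y ^ (2*2) * Fdens y)
        - (25 * y^4 * Fdens y + 5 * y^5 * ((1/(2*π)) * (fD (1 - y^2/16) * (-(y/8)))))
        + (240 * y^2 * Gdens y + 80 * y^3 * ((1/(2*π)) * (gD (1 - y^2/16) * (-(y/8)))))) = 0 := by
      have hr1 := rel1 y h0 (by linarith)
      have hr2 := rel2 y h0 (by linarith)
      have h3y := key3 y h0 (by linarith)
      have h16 : (16:ℝ) - y^2 ≠ 0 := by nlinarith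
      apply mul_left_cancel₀ h16
      rw [mul_zero]
      linear_combination (30*y*(16-y^2)) * h3y + (5*y^4/8) * hr2 + (-(10*y^4)) * hr1
    rw [hz] at h
    exact h
  · intro y h0 h4
    exact (hasDerivAt_H2 y h0 (by linarith)).continuousAt
  · rw [cInt_four, cInt_four, cInt_four, Fdens_four, Gdens_four]
    ring

/-! ### Auxiliary identity J (derivative of identity (i) divided by 2k) -/

lemma hasDerivAt_HJ (y : ℝ) (h0 : 0 < y) (h5 : y < 9/2) :
    HasDerivAt (fun z => 20 * cInt 0 z - 3 * cInt 1 z + 8 * dInt 0 z - 2 * dInt 1 z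
        + (12 - z^2) * z * Fdens z + 4 * z * Gdens z
        + Real.log z * (2 * cInt 1 z - 8 * cInt 0 z))
      (20 * -(y ^ (2*0) * Fdens y) - 3 * -(y ^ (2*1) * Fdens y)
        + 8 * -(y ^ (2*0) * Real.log y * Fdens y) - 2 * -(y ^ (2*1) * Real.log y * Fdens y)
        + ((12 - 3*y^2) * Fdens y + (12 - y^2) * y * ((1/(2*π)) * (fD (1 - y^2/16) * (-(y/8)))))
        + (4 * Gdens y + 4 * y * ((1/(2*π)) * (gD (1 - y^2/16) * (-(y/8)))))
        + (y⁻¹ * (2 * cInt 1 y - 8 * cInt 0 y)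
            + Real.log y * (2 * -(y ^ (2*1) * Fdens y) - 8 * -(y ^ (2*0) * Fdens y)))) y := by
  have hF := hasDerivAt_Fdens y h0 h5
  have hG := hasDerivAt_Gdens y h0 h5
  have hc0 := hasDerivAt_cInt 0 y h0 h5
  have hc1 := hasDerivAt_cInt 1 y h0 h5
  have hd0 := hasDerivAt_dInt 0 y h0 h5
  have hd1 := hasDerivAt_dInt 1 y h0 h5
  have hlog := Real.hasDerivAt_log (ne_of_gt h0)
  have hp1 : HasDerivAt (fun z : ℝ => (12 - z^2) * z) (12 - 3*y^2) y := by
    have h := ((hasDerivAt_pow 2 y).const_sub 12).mul (hasDerivAt_id y)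
    refine h.congr_deriv ?_
    simp only [id_eq]
    push_cast
    ring
  have hp2 : HasDerivAt (fun z : ℝ => 4 * z) 4 y := by
    simpa using (hasDerivAt_id y).const_mul (4:ℝ)
  exact (((((((hc0.const_mul 20).sub (hc1.const_mul 3)).add (hd0.const_mul 8)).sub
    (hd1.const_mul 2)).add (hp1.mul hF)).add (hp2.mul hG)).add
    (hlog.mul ((hc1.const_mul 2).sub (hc0.const_mul 8))))

lemma keyJ : ∀ k : ℝ, 0 < k → k ≤ 4 →
    20 * cInt 0 k - 3 * cInt 1 k + 8 * dInt 0 k - 2 * dInt 1 k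
      + (12 - k^2) * k * Fdens k + 4 * k * Gdens k
      + Real.log k * (2 * cInt 1 k - 8 * cInt 0 k) = 0 := by
  apply vanish
  · intro y h0 h4
    have h := hasDerivAt_HJ y h0 (by linarith)
    have h3y := key3 y h0 (by linarith)
    have hc' : y⁻¹ * (2 * cInt 1 y - 8 * cInt 0 y) = (8 - y^2) * Fdens y + 8 * Gdens y := by
      rw [inv_mul_eq_div, div_eq_iff (ne_of_gt h0)]
      linear_combination -h3y
    have hz : (20 * -(y ^ (2*0) * Fdens y) - 3 * -(y ^ (2*1) * Fdens y)
        + 8 * -(y ^ (2*0) * Real.log y * Fdens y) - 2 * -(y ^ (2*1) * Real.log y * Fdens y)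
        + ((12 - 3*y^2) * Fdens y + (12 - y^2) * y * ((1/(2*π)) * (fD (1 - y^2/16) * (-(y/8)))))
        + (4 * Gdens y + 4 * y * ((1/(2*π)) * (gD (1 - y^2/16) * (-(y/8)))))
        + (y⁻¹ * (2 * cInt 1 y - 8 * cInt 0 y)
            + Real.log y * (2 * -(y ^ (2*1) * Fdens y) - 8 * -(y ^ (2*0) * Fdens y)))) = 0 := by
      rw [hc']
      have hr1 := rel1 y h0 (by linarith)
      have hr2 := rel2 y h0 (by linarith)
      have h16 : (16:ℝ) - y^2 ≠ 0 := by nlinarith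
      apply mul_left_cancel₀ h16
      rw [mul_zero]
      linear_combination (-(12-y^2)/8) * hr2 + (-(y^2)/2) * hr1
    rw [hz] at h
    exact h
  · intro y h0 h4
    exact (hasDerivAt_HJ y h0 (by linarith)).continuousAt
  · rw [cInt_four, cInt_four, dInt_four, dInt_four, Fdens_four, Gdens_four]
    ring

/-! ### Identity (i) -/

lemma hasDerivAt_H1 (y : ℝ) (h0 : 0 < y) (h5 : y < 9/2) :
    HasDerivAt (fun z => 20 * z^2 * cInt 0 z - 3 * (z^2 + 12) * cInt 1 z + 4 * cInt 2 z
        + 8 * z^2 * dInt 0 z - 2 * z^2 * dInt 1 z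
        + z^3 * (8 - z^2) * Real.log z * Fdens z + 8 * z^3 * Real.log z * Gdens z)
      ((40 * y * cInt 0 y + 20 * y^2 * -(y ^ (2*0) * Fdens y))
        - (6 * y * cInt 1 y + 3 * (y^2 + 12) * -(y ^ (2*1) * Fdens y))
        + 4 * -(y ^ (2*2) * Fdens y)
        + (16 * y * dInt 0 y + 8 * y^2 * -(y ^ (2*0) * Real.log y * Fdens y))
        - (4 * y * dInt 1 y + 2 * y^2 * -(y ^ (2*1) * Real.log y * Fdens y))
        + (((24*y^2 - 5*y^4) * Real.log y + y^3 * (8 - y^2) * y⁻¹) * Fdens y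
            + y^3 * (8 - y^2) * Real.log y * ((1/(2*π)) * (fD (1 - y^2/16) * (-(y/8)))))
        + ((24 * y^2 * Real.log y + 8 * y^3 * y⁻¹) * Gdens y
            + 8 * y^3 * Real.log y * ((1/(2*π)) * (gD (1 - y^2/16) * (-(y/8)))))) y := by
  have hF := hasDerivAt_Fdens y h0 h5
  have hG := hasDerivAt_Gdens y h0 h5
  have hc0 := hasDerivAt_cInt 0 y h0 h5
  have hc1 := hasDerivAt_cInt 1 y h0 h5
  have hc2 := hasDerivAt_cInt 2 y h0 h5
  have hd0 := hasDerivAt_dInt 0 y h0 h5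
  have hd1 := hasDerivAt_dInt 1 y h0 h5
  have hlog := Real.hasDerivAt_log (ne_of_gt h0)
  have hq1 : HasDerivAt (fun z : ℝ => 20 * z^2) (40 * y) y := by
    have h := (hasDerivAt_pow 2 y).const_mul (20:ℝ)
    refine h.congr_deriv ?_
    push_cast
    ring
  have hq2 : HasDerivAt (fun z : ℝ => 3 * (z^2 + 12)) (6 * y) y := by
    have h := ((hasDerivAt_pow 2 y).add_const 12).const_mul (3:ℝ)
    refine h.congr_deriv ?_
    push_cast
    ring
  have hq3 : HasDerivAt (fun z : ℝ => 8 * z^2) (16 * y) y := by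
    have h := (hasDerivAt_pow 2 y).const_mul (8:ℝ)
    refine h.congr_deriv ?_
    push_cast
    ring
  have hq4 : HasDerivAt (fun z : ℝ => 2 * z^2) (4 * y) y := by
    have h := (hasDerivAt_pow 2 y).const_mul (2:ℝ)
    refine h.congr_deriv ?_
    push_cast
    ring
  have hq5 : HasDerivAt (fun z : ℝ => z^3 * (8 - z^2)) (24*y^2 - 5*y^4) y := by
    have h := (hasDerivAt_pow 3 y).mul ((hasDerivAt_pow 2 y).const_sub 8)
    refine h.congr_deriv ?_
    push_cast
    ring
  have hq6 : HasDerivAt (fun z : ℝ => 8 * z^3) (24 * y^2) y := by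
    have h := (hasDerivAt_pow 3 y).const_mul (8:ℝ)
    refine h.congr_deriv ?_
    push_cast
    ring
  exact (((((((hq1.mul hc0).sub (hq2.mul hc1)).add (hc2.const_mul 4)).add
    (hq3.mul hd0)).sub (hq4.mul hd1)).add ((hq5.mul hlog).mul hF)).add
    ((hq6.mul hlog).mul hG))

lemma key1 : ∀ k : ℝ, 0 < k → k ≤ 4 →
    20 * k^2 * cInt 0 k - 3 * (k^2 + 12) * cInt 1 k + 4 * cInt 2 k
      + 8 * k^2 * dInt 0 k - 2 * k^2 * dInt 1 k
      + k^3 * (8 - k^2) * Real.log k * Fdens k + 8 * k^3 * Real.log k * Gdens k = 0 := by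
  apply vanish
  · intro y h0 h4
    have h := hasDerivAt_H1 y h0 (by linarith)
    have hy : y ≠ 0 := ne_of_gt h0
    have hv1 : y^3 * (8 - y^2) * y⁻¹ = y^2 * (8 - y^2) := by
      field_simp
    have hv2 : (8:ℝ) * y^3 * y⁻¹ = 8 * y^2 := by
      field_simp
    have hz : ((40 * y * cInt 0 y + 20 * y^2 * -(y ^ (2*0) * Fdens y))
        - (6 * y * cInt 1 y + 3 * (y^2 + 12) * -(y ^ (2*1) * Fdens y))
        + 4 * -(y ^ (2*2) * Fdens y)
        + (16 * y * dInt 0 y + 8 * y^2 * -(y ^ (2*0) * Real.log y * Fdens y))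
        - (4 * y * dInt 1 y + 2 * y^2 * -(y ^ (2*1) * Real.log y * Fdens y))
        + (((24*y^2 - 5*y^4) * Real.log y + y^3 * (8 - y^2) * y⁻¹) * Fdens y
            + y^3 * (8 - y^2) * Real.log y * ((1/(2*π)) * (fD (1 - y^2/16) * (-(y/8)))))
        + ((24 * y^2 * Real.log y + 8 * y^3 * y⁻¹) * Gdens y
            + 8 * y^3 * Real.log y * ((1/(2*π)) * (gD (1 - y^2/16) * (-(y/8)))))) = 0 := by
      rw [hv1, hv2]
      have hr1 := rel1 y h0 (by linarith)
      have hr2 := rel2 y h0 (by linarith)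
      have h3y := key3 y h0 (by linarith)
      have hJy := keyJ y h0 (by linarith)
      have h16 : (16:ℝ) - y^2 ≠ 0 := by nlinarith
      apply mul_left_cancel₀ h16
      rw [mul_zero]
      linear_combination (2*y*(16-y^2)) * hJy + (2*y*(16-y^2)*Real.log y) * h3y
        + (-(y^2*(8-y^2)/8)*Real.log y) * hr2 + (-(y^4)*Real.log y) * hr1
    rw [hz] at h
    exact h
  · intro y h0 h4
    exact (hasDerivAt_H1 y h0 (by linarith)).continuousAt
  · rw [cInt_four, cInt_four, cInt_four, dInt_four, dInt_four, Fdens_four, Gdens_four]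
    ring

/-! ### Main theorem -/

theorem three_linear_identities (k : ℝ) (hk0 : 0 < k) (hk4 : k < 4) :
    (0 = (20 / k) * cInt 0 k - (3 * (k ^ 2 + 12) / k ^ 3) * cInt 1 k +
        (4 / k ^ 3) * cInt 2 k + (8 / k) * dInt 0 k - (2 / k) * dInt 1 k +
        (8 - k ^ 2) * Real.log k * Fdens k + 8 * Real.log k * Gdens k) ∧
    (0 = (120 / k ^ 3) * cInt 0 k - (30 * (k ^ 2 + 12) / k ^ 5) * cInt 1 k +
        (40 / k ^ 5) * cInt 2 k - 5 * Fdens k + (80 / k ^ 2) * Gdens k) ∧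
    (0 = (8 / k) * cInt 0 k - (2 / k) * cInt 1 k + (8 - k ^ 2) * Fdens k + 8 * Gdens k) := by
  have hk : k ≠ 0 := ne_of_gt hk0
  have e1 := key1 k hk0 hk4.le
  have e2 := key2 k hk0 hk4.le
  have e3 := key3 k hk0 hk4.le
  refine ⟨?_, ?_, ?_⟩
  · have h : (20 / k) * cInt 0 k - (3 * (k ^ 2 + 12) / k ^ 3) * cInt 1 k +
        (4 / k ^ 3) * cInt 2 k + (8 / k) * dInt 0 k - (2 / k) * dInt 1 k +
        (8 - k ^ 2) * Real.log k * Fdens k + 8 * Real.log k * Gdens k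
        = (1/k^3) * (20 * k^2 * cInt 0 k - 3 * (k^2 + 12) * cInt 1 k + 4 * cInt 2 k
          + 8 * k^2 * dInt 0 k - 2 * k^2 * dInt 1 k
          + k^3 * (8 - k^2) * Real.log k * Fdens k + 8 * k^3 * Real.log k * Gdens k) := by
      field_simp
    rw [h, e1, mul_zero]
  · have h : (120 / k ^ 3) * cInt 0 k - (30 * (k ^ 2 + 12) / k ^ 5) * cInt 1 k +
        (40 / k ^ 5) * cInt 2 k - 5 * Fdens k + (80 / k ^ 2) * Gdens k
        = (1/k^5) * (120 * k^2 * cInt 0 k - 30 * (k^2 + 12) * cInt 1 k + 40 * cInt 2 k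
          - 5 * k^5 * Fdens k + 80 * k^3 * Gdens k) := by
      field_simp
    rw [h, e2, mul_zero]
  · have h : (8 / k) * cInt 0 k - (2 / k) * cInt 1 k + (8 - k ^ 2) * Fdens k + 8 * Gdens k
        = (1/k) * (8 * cInt 0 k - 2 * cInt 1 k + k * (8 - k^2) * Fdens k
          + 8 * k * Gdens k) := by
      field_simp
    rw [h, e3, mul_zero]
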